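/- arXiv:1711.02576 — 2 statements merged into one kernel-verified Lean document; each statement's English description precedes it below -/
import Mathlib

section
/- Let M = max{|a_k| : 1 ≤ k ≤ n−1}, let m = max{k ∈ {1, …, n−1} : |a_k| = M}, and let F be the Frobenius companion matrix of p. Suppose n ≥ 3 and 1 ≤ b ≤ n−2. Then ‖X_b‖_1 < N(F) if and only if 1 < |a_0| < 1 + M, m ≤ b, and |a_{b+1}| + |a_b|/|a_0| < M. -/
noncomputable section

/-- Maximum absolute row sum (the `∞`-norm). -/
def infNorm {n : ℕ} (A : Matrix (Fin n) (Fin n) ℂ) : ℝ :=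
  ⨆ i, ∑ j, ‖A i j‖

/-- Maximum absolute column sum (the `1`-norm). -/
def oneNorm {n : ℕ} (A : Matrix (Fin n) (Fin n) ℂ) : ℝ :=
  ⨆ j, ∑ i, ‖A i j‖

/-- `N(A) = min {‖A‖_∞, ‖A‖_1}`. -/
def NN {n : ℕ} (A : Matrix (Fin n) (Fin n) ℂ) : ℝ :=
  min (infNorm A) (oneNorm A)

/-- The monic polynomial `p(x) = x^n + a_{n-1}x^{n-1} + ⋯ + a_1 x + a_0`. -/
def pPoly (n : ℕ) (a : ℕ → ℂ) : Polynomial ℂ :=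
  Polynomial.X ^ n + ∑ k ∈ Finset.range n, Polynomial.C (a k) * Polynomial.X ^ k

/-- Coefficients of the monic reversal polynomial `p♯`:
`asharp n a k` is the coefficient of `x^k` in `p♯`, namely `1/a_0` for `k = 0`
and `a_{n-k}/a_0` for `1 ≤ k ≤ n-1`. -/
def asharp (n : ℕ) (a : ℕ → ℂ) : ℕ → ℂ :=
  fun k => if k = 0 then 1 / a 0 else a (n - k) / a 0

/-- A unit sparse companion matrix of `p` in Hessenberg form, with explicit data:
`m` (0-based; `m + 1 ≤ n`), and 0-based positions `(r k, c k)` (for `k = 0, …, n-1`)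
satisfying `r k - c k = k`, `m ≤ r k ≤ n-1`, `0 ≤ c k ≤ m`; the superdiagonal
entries are `1`, the entry at `(r k, c k)` is `-a_{n-1-k}`, and all other entries
are `0`.  (This is the 0-based translation of the 1-based description.) -/
def IsUnitSparseData (n m : ℕ) (a : ℕ → ℂ) (C : Matrix (Fin n) (Fin n) ℂ)
    (r c : Fin n → Fin n) : Prop :=
  m + 1 ≤ n ∧
  (∀ k : Fin n, (r k : ℕ) = (c k : ℕ) + (k : ℕ)) ∧
  (∀ k : Fin n, m ≤ (r k : ℕ)) ∧
  (∀ k : Fin n, (c k : ℕ) ≤ m) ∧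
  (∀ k : Fin n, C (r k) (c k) = -a (n - 1 - (k : ℕ))) ∧
  (∀ i j : Fin n, (j : ℕ) = (i : ℕ) + 1 → C i j = 1) ∧
  (∀ i j : Fin n, (j : ℕ) ≠ (i : ℕ) + 1 →
    (∀ k : Fin n, ¬(r k = i ∧ c k = j)) → C i j = 0)

/-- A unit sparse companion matrix of `p` in Hessenberg form. -/
def IsUnitSparse (n : ℕ) (a : ℕ → ℂ) (C : Matrix (Fin n) (Fin n) ℂ) : Prop :=
  ∃ (m : ℕ) (r c : Fin n → Fin n), IsUnitSparseData n m a C r c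

/-- A Fiedler companion matrix of `p` in Hessenberg form (with explicit position
data): a unit sparse companion matrix such that for `1 ≤ k ≤ n-1`, if `-a_{k-1}`
occupies position `(i,j)` then `-a_k` occupies position `(i-1,j)` or `(i,j+1)`.
Here the coefficient `-a_{n-1-k}` sits at position index `k`, so the coefficient
`-a_{k-1}` has index `k' = n-k` and `-a_k` has index `n-1-k = k' - 1`. -/
def IsFiedlerData (n m : ℕ) (a : ℕ → ℂ) (C : Matrix (Fin n) (Fin n) ℂ)
    (r c : Fin n → Fin n) : Prop :=
  IsUnitSparseData n m a C r c ∧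
  ∀ k k' : Fin n, (k' : ℕ) = (k : ℕ) + 1 →
    ((r k : ℕ) + 1 = (r k' : ℕ) ∧ c k = c k') ∨
    (r k = r k' ∧ (c k : ℕ) = (c k' : ℕ) + 1)

/-- The Frobenius companion matrix of the monic polynomial with coefficients `a`
(0-based: superdiagonal `1`'s and last row `-a_0, -a_1, …, -a_{n-1}`). -/
def Frob (n : ℕ) (a : ℕ → ℂ) : Matrix (Fin n) (Fin n) ℂ :=
  Matrix.of fun i j =>
    if (j : ℕ) = (i : ℕ) + 1 then 1
    else if (i : ℕ) = n - 1 then -a (j : ℕ)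
    else 0

/-- The Fiedler companion matrix `L_b` (0-based translation): superdiagonal `1`'s,
`(L_b)_{i,b} = -a_{n+b-1-i}` for `b ≤ i ≤ n-2`, and `(L_b)_{n-1,j} = -a_j` for
`0 ≤ j ≤ b`; all other entries `0`. -/
def Lmat (n b : ℕ) (a : ℕ → ℂ) : Matrix (Fin n) (Fin n) ℂ :=
  Matrix.of fun i j =>
    if (j : ℕ) = (i : ℕ) + 1 then 1
    else if (i : ℕ) = n - 1 ∧ (j : ℕ) ≤ b then -a (j : ℕ)
    else if (j : ℕ) = b ∧ b ≤ (i : ℕ) ∧ (i : ℕ) + 2 ≤ n then -a (n + b - 1 - (i : ℕ))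
    else 0

/-- The matrix `W` (0-based translation): `W_{0,0} = -a_{n-1}`, `W_{0,n-1} = -a_0`,
`W_{i,i-1} = 1` for `1 ≤ i ≤ n-1`, `W_{i,0} = a_{i-1}/a_0` for `2 ≤ i ≤ n-1`;
all other entries `0`. -/
def Wmat (n : ℕ) (a : ℕ → ℂ) : Matrix (Fin n) (Fin n) ℂ :=
  Matrix.of fun i j =>
    if (i : ℕ) = 0 ∧ (j : ℕ) = 0 then -a (n - 1)
    else if (i : ℕ) = 0 ∧ (j : ℕ) = n - 1 then -a 0
    else if (i : ℕ) = (j : ℕ) + 1 then 1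
    else if 2 ≤ (i : ℕ) ∧ (j : ℕ) = 0 then a ((i : ℕ) - 1) / a 0
    else 0

/-- The matrix `X_b` (0-based translation): `(X_b)_{0,j} = -a_{n-1-j}` for
`0 ≤ j ≤ n-2-b`, `(X_b)_{0,n-1} = -a_0`, `(X_b)_{i,i-1} = 1` for `1 ≤ i ≤ n-2`,
`(X_b)_{n-1,n-2} = 1`, `(X_b)_{n-1,j} = a_{n-2-j}/a_0` for `n-2-b ≤ j ≤ n-3`;
all other entries `0`. -/
def Xmat (n b : ℕ) (a : ℕ → ℂ) : Matrix (Fin n) (Fin n) ℂ :=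
  Matrix.of fun i j =>
    if (i : ℕ) = 0 ∧ (j : ℕ) + b ≤ n - 2 then -a (n - 1 - (j : ℕ))
    else if (i : ℕ) = 0 ∧ (j : ℕ) = n - 1 then -a 0
    else if (i : ℕ) = (j : ℕ) + 1 ∧ (i : ℕ) + 2 ≤ n then 1
    else if (i : ℕ) = n - 1 ∧ (j : ℕ) = n - 2 then 1
    else if (i : ℕ) = n - 1 ∧ n - 2 ≤ (j : ℕ) + b ∧ (j : ℕ) + 3 ≤ n then
      a (n - 2 - (j : ℕ)) / a 0
    else 0

/-- A matrix `E` of type `E_c(q)` for the monic polynomial with coefficients `b`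
(0-based translation of the 1-based description): superdiagonal `1`'s,
`E_{n-1,0} = -b_0`, and positions `(r k, col k)` for `k = 0, …, n-2` with
`r k = col k + k`, `c ≤ r k`, `1 ≤ col k ≤ c`, holding `-b_{n-1-k}`; all other
entries `0`. -/
def IsTypeE (n c : ℕ) (b : ℕ → ℂ) (E : Matrix (Fin n) (Fin n) ℂ) : Prop :=
  ∃ r col : ℕ → Fin n,
    (∀ k : ℕ, k ≤ n - 2 → (r k : ℕ) = (col k : ℕ) + k) ∧
    (∀ k : ℕ, k ≤ n - 2 → c ≤ (r k : ℕ)) ∧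
    (∀ k : ℕ, k ≤ n - 2 → 1 ≤ (col k : ℕ) ∧ (col k : ℕ) ≤ c) ∧
    (∀ k : ℕ, k ≤ n - 2 → E (r k) (col k) = -b (n - 1 - k)) ∧
    (∀ i j : Fin n, (j : ℕ) = (i : ℕ) + 1 → E i j = 1) ∧
    (∀ i j : Fin n, (i : ℕ) = n - 1 → (j : ℕ) = 0 → E i j = -b 0) ∧
    (∀ i j : Fin n, (j : ℕ) ≠ (i : ℕ) + 1 → ¬((i : ℕ) = n - 1 ∧ (j : ℕ) = 0) →
      (∀ k : ℕ, k ≤ n - 2 → ¬(r k = i ∧ col k = j)) → E i j = 0)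

/-- `A` is of type `E_c(p♯)⁻¹`: `A = E⁻¹` for some `E` of type `E_c(p♯)`. -/
def IsTypeEInv (n c : ℕ) (a : ℕ → ℂ) (A : Matrix (Fin n) (Fin n) ℂ) : Prop :=
  ∃ E : Matrix (Fin n) (Fin n) ℂ, IsTypeE n c (asharp n a) E ∧ A = E⁻¹


private lemma le_finSup {n : ℕ} (f : Fin n → ℝ) (i : Fin n) : f i ≤ ⨆ k, f k :=
  le_ciSup (Set.Finite.bddAbove (Set.finite_range f)) i

private lemma finSup_lt {n : ℕ} (hn : 0 < n) {f : Fin n → ℝ} {c : ℝ}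
    (h : ∀ i, f i < c) : (⨆ i, f i) < c := by
  haveI : Nonempty (Fin n) := ⟨⟨0, hn⟩⟩
  obtain ⟨i, hi⟩ := Finite.exists_max f
  exact lt_of_le_of_lt (ciSup_le hi) (h i)

private lemma sum_eq_three {n : ℕ} (f : Fin n → ℝ) (x y z : Fin n)
    (hxy : x ≠ y) (hxz : x ≠ z) (hyz : y ≠ z)
    (h : ∀ w, w ≠ x → w ≠ y → w ≠ z → f w = 0) :
    ∑ w, f w = f x + f y + f z := by
  have h1 : ∑ w, f w = ∑ w ∈ ({x, y, z} : Finset (Fin n)), f w := by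
    refine (Finset.sum_subset (Finset.subset_univ _) ?_).symm
    intro w _ hw
    simp only [Finset.mem_insert, Finset.mem_singleton, not_or] at hw
    exact h w hw.1 hw.2.1 hw.2.2
  rw [h1, Finset.sum_insert (by simp [hxy, hxz]), Finset.sum_pair hyz, add_assoc]

private lemma Xmat_apply (n b : ℕ) (a : ℕ → ℂ) (i j : Fin n) :
    Xmat n b a i j =
      if (i : ℕ) = 0 ∧ (j : ℕ) + b ≤ n - 2 then -a (n - 1 - (j : ℕ))
      else if (i : ℕ) = 0 ∧ (j : ℕ) = n - 1 then -a 0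
      else if (i : ℕ) = (j : ℕ) + 1 ∧ (i : ℕ) + 2 ≤ n then 1
      else if (i : ℕ) = n - 1 ∧ (j : ℕ) = n - 2 then 1
      else if (i : ℕ) = n - 1 ∧ n - 2 ≤ (j : ℕ) + b ∧ (j : ℕ) + 3 ≤ n then
        a (n - 2 - (j : ℕ)) / a 0
      else 0 := rfl

private lemma Frob_apply (n : ℕ) (a : ℕ → ℂ) (i j : Fin n) :
    Frob n a i j =
      if (j : ℕ) = (i : ℕ) + 1 then 1
      else if (i : ℕ) = n - 1 then -a (j : ℕ)
      else 0 := rfl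

private lemma Xmat_eq_zero {n b : ℕ} (a : ℕ → ℂ) {i j : Fin n}
    (h1 : ¬((i : ℕ) = 0 ∧ (j : ℕ) + b ≤ n - 2))
    (h2 : ¬((i : ℕ) = 0 ∧ (j : ℕ) = n - 1))
    (h3 : ¬((i : ℕ) = (j : ℕ) + 1 ∧ (i : ℕ) + 2 ≤ n))
    (h4 : ¬((i : ℕ) = n - 1 ∧ (j : ℕ) = n - 2))
    (h5 : ¬((i : ℕ) = n - 1 ∧ n - 2 ≤ (j : ℕ) + b ∧ (j : ℕ) + 3 ≤ n)) :
    Xmat n b a i j = 0 := by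
  rw [Xmat_apply, if_neg h1, if_neg h2, if_neg h3, if_neg h4, if_neg h5]

private lemma Xmat_eq_row0 {n b : ℕ} (a : ℕ → ℂ) {i j : Fin n}
    (hi : (i : ℕ) = 0) (hj : (j : ℕ) + b ≤ n - 2) :
    Xmat n b a i j = -a (n - 1 - (j : ℕ)) := by
  rw [Xmat_apply, if_pos ⟨hi, hj⟩]

private lemma Xmat_eq_row0_last {n b : ℕ} (a : ℕ → ℂ) (hn : 3 ≤ n) (hb1 : 1 ≤ b)
    {i j : Fin n} (hi : (i : ℕ) = 0) (hj : (j : ℕ) = n - 1) :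
    Xmat n b a i j = -a 0 := by
  rw [Xmat_apply, if_neg (by omega), if_pos ⟨hi, hj⟩]

private lemma Xmat_eq_sub {n b : ℕ} (a : ℕ → ℂ) {i j : Fin n}
    (hi : (i : ℕ) = (j : ℕ) + 1) (h2 : (i : ℕ) + 2 ≤ n) :
    Xmat n b a i j = 1 := by
  rw [Xmat_apply, if_neg (by omega), if_neg (by omega), if_pos ⟨hi, h2⟩]

private lemma Xmat_eq_corner {n b : ℕ} (a : ℕ → ℂ) (hn : 3 ≤ n)
    {i j : Fin n} (hi : (i : ℕ) = n - 1) (hj : (j : ℕ) = n - 2) :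
    Xmat n b a i j = 1 := by
  rw [Xmat_apply, if_neg (by omega), if_neg (by omega), if_neg (by omega), if_pos ⟨hi, hj⟩]

private lemma Xmat_eq_div {n b : ℕ} (a : ℕ → ℂ) (hn : 3 ≤ n) {i j : Fin n}
    (hi : (i : ℕ) = n - 1) (h1 : n - 2 ≤ (j : ℕ) + b) (h2 : (j : ℕ) + 3 ≤ n)
    (hj : (j : ℕ) ≠ n - 2) :
    Xmat n b a i j = a (n - 2 - (j : ℕ)) / a 0 := by
  rw [Xmat_apply, if_neg (by omega), if_neg (by omega), if_neg (by omega),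
    if_neg (by omega), if_pos ⟨hi, h1, h2⟩]

private lemma Frob_eq_sub {n : ℕ} (a : ℕ → ℂ) {i j : Fin n}
    (hj : (j : ℕ) = (i : ℕ) + 1) : Frob n a i j = 1 := by
  rw [Frob_apply, if_pos hj]

private lemma Frob_eq_bot {n : ℕ} (a : ℕ → ℂ) {i j : Fin n}
    (hj : (j : ℕ) ≠ (i : ℕ) + 1) (hi : (i : ℕ) = n - 1) :
    Frob n a i j = -a (j : ℕ) := by
  rw [Frob_apply, if_neg hj, if_pos hi]

private lemma Frob_eq_zero {n : ℕ} (a : ℕ → ℂ) {i j : Fin n}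
    (hj : (j : ℕ) ≠ (i : ℕ) + 1) (hi : (i : ℕ) ≠ n - 1) :
    Frob n a i j = 0 := by
  rw [Frob_apply, if_neg hj, if_neg hi]


private lemma colX_L1 {n b : ℕ} (a : ℕ → ℂ) (hn : 3 ≤ n) (hb1 : 1 ≤ b) {j : Fin n}
    (hj : (j : ℕ) = n - 1) :
    ∑ i, ‖Xmat n b a i j‖ = ‖a 0‖ := by
  have hz : ∀ i : Fin n, i ≠ ⟨0, by omega⟩ → ‖Xmat n b a i j‖ = 0 := by
    intro i hix
    have h0 : (i : ℕ) ≠ 0 := fun h => hix (Fin.ext h)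
    have hlt := i.isLt
    rw [Xmat_eq_zero a (by omega) (by omega) (by omega) (by omega) (by omega),
      norm_zero]
  rw [Fintype.sum_eq_single _ hz, Xmat_eq_row0_last a hn hb1 rfl hj, norm_neg]

private lemma colX_L2 {n b : ℕ} (a : ℕ → ℂ) (hn : 3 ≤ n) (hb1 : 1 ≤ b) {j : Fin n}
    (hj : (j : ℕ) = n - 2) :
    ∑ i, ‖Xmat n b a i j‖ = 1 := by
  have hz : ∀ i : Fin n, i ≠ ⟨n - 1, by omega⟩ → ‖Xmat n b a i j‖ = 0 := by
    intro i hix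
    have h0 : (i : ℕ) ≠ n - 1 := fun h => hix (Fin.ext h)
    have hlt := i.isLt
    rw [Xmat_eq_zero a (by omega) (by omega) (by omega) (by omega) (by omega),
      norm_zero]
  rw [Fintype.sum_eq_single _ hz, Xmat_eq_corner a hn rfl hj, norm_one]

private lemma colX_L3 {n b : ℕ} (a : ℕ → ℂ) (hn : 3 ≤ n) (hb1 : 1 ≤ b) (hb2 : b + 2 ≤ n)
    {j : Fin n} (hj : (j : ℕ) + b = n - 2) :
    ∑ i, ‖Xmat n b a i j‖ =
      ‖a (b + 1)‖ + 1 + ‖a b‖ / ‖a 0‖ := by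
  have hlt := j.isLt
  have hx : (0 : ℕ) < n := by omega
  have hy : (j : ℕ) + 1 < n := by omega
  have hz' : n - 1 < n := by omega
  have hxy : (⟨0, hx⟩ : Fin n) ≠ ⟨(j : ℕ) + 1, hy⟩ := fun h => by
    have h' : (0 : ℕ) = (j : ℕ) + 1 := congrArg Fin.val h; omega
  have hxz : (⟨0, hx⟩ : Fin n) ≠ ⟨n - 1, hz'⟩ := fun h => by
    have h' : (0 : ℕ) = n - 1 := congrArg Fin.val h; omega
  have hyz : (⟨(j : ℕ) + 1, hy⟩ : Fin n) ≠ ⟨n - 1, hz'⟩ := fun h => by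
    have h' : (j : ℕ) + 1 = n - 1 := congrArg Fin.val h; omega
  have hzero : ∀ w : Fin n, w ≠ ⟨0, hx⟩ → w ≠ ⟨(j : ℕ) + 1, hy⟩ → w ≠ ⟨n - 1, hz'⟩ →
      ‖Xmat n b a w j‖ = 0 := by
    intro w h0 h1 h2
    have h0' : (w : ℕ) ≠ 0 := fun h => h0 (Fin.ext h)
    have h1' : (w : ℕ) ≠ (j : ℕ) + 1 := fun h => h1 (Fin.ext h)
    have h2' : (w : ℕ) ≠ n - 1 := fun h => h2 (Fin.ext h)
    rw [Xmat_eq_zero a (by omega) (by omega) (by omega) (by omega) (by omega),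
      norm_zero]
  have e1 : ‖Xmat n b a ⟨0, hx⟩ j‖ = ‖a (b + 1)‖ := by
    rw [Xmat_eq_row0 a rfl (by omega), show n - 1 - (j : ℕ) = b + 1 by omega,
      norm_neg]
  have e2 : ‖Xmat n b a ⟨(j : ℕ) + 1, hy⟩ j‖ = 1 := by
    rw [Xmat_eq_sub a rfl (show (j : ℕ) + 1 + 2 ≤ n by omega), norm_one]
  have e3 : ‖Xmat n b a ⟨n - 1, hz'⟩ j‖ =
      ‖a b‖ / ‖a 0‖ := by
    rw [Xmat_eq_div a hn rfl (by omega) (by omega) (by omega),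
      show n - 2 - (j : ℕ) = b by omega, norm_div]
  rw [sum_eq_three _ _ _ _ hxy hxz hyz hzero, e1, e2, e3]

private lemma colX_L4 {n b : ℕ} (a : ℕ → ℂ) (hn : 3 ≤ n) (hb1 : 1 ≤ b)
    {j : Fin n} (hj : (j : ℕ) + b + 3 ≤ n) (k : ℕ) (hk : (j : ℕ) + k + 1 = n) :
    ∑ i, ‖Xmat n b a i j‖ = ‖a k‖ + 1 := by
  have hlt := j.isLt
  have hx : (0 : ℕ) < n := by omega
  have hy : (j : ℕ) + 1 < n := by omega
  have hxy : (⟨0, hx⟩ : Fin n) ≠ ⟨(j : ℕ) + 1, hy⟩ := fun h => by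
    have h' : (0 : ℕ) = (j : ℕ) + 1 := congrArg Fin.val h; omega
  have hzero : ∀ w : Fin n, w ≠ ⟨0, hx⟩ ∧ w ≠ ⟨(j : ℕ) + 1, hy⟩ →
      ‖Xmat n b a w j‖ = 0 := by
    intro w hw
    have h0' : (w : ℕ) ≠ 0 := fun h => hw.1 (Fin.ext h)
    have h1' : (w : ℕ) ≠ (j : ℕ) + 1 := fun h => hw.2 (Fin.ext h)
    rw [Xmat_eq_zero a (by omega) (by omega) (by omega) (by omega) (by omega),
      norm_zero]
  rw [Fintype.sum_eq_add _ _ hxy hzero]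
  have e1 : ‖Xmat n b a ⟨0, hx⟩ j‖ = ‖a k‖ := by
    rw [Xmat_eq_row0 a rfl (by omega), show n - 1 - (j : ℕ) = k by omega,
      norm_neg]
  have e2 : ‖Xmat n b a ⟨(j : ℕ) + 1, hy⟩ j‖ = 1 := by
    rw [Xmat_eq_sub a rfl (show (j : ℕ) + 1 + 2 ≤ n by omega), norm_one]
  rw [e1, e2]

private lemma colX_L5 {n b : ℕ} (a : ℕ → ℂ) (hn : 3 ≤ n) (hb1 : 1 ≤ b)
    {j : Fin n} (h5a : n - 1 ≤ (j : ℕ) + b) (h5b : (j : ℕ) + 3 ≤ n)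
    (k : ℕ) (hk : (j : ℕ) + k + 2 = n) :
    ∑ i, ‖Xmat n b a i j‖ = 1 + ‖a k‖ / ‖a 0‖ := by
  have hlt := j.isLt
  have hy : (j : ℕ) + 1 < n := by omega
  have hz' : n - 1 < n := by omega
  have hyz : (⟨(j : ℕ) + 1, hy⟩ : Fin n) ≠ ⟨n - 1, hz'⟩ := fun h => by
    have h' : (j : ℕ) + 1 = n - 1 := congrArg Fin.val h; omega
  have hzero : ∀ w : Fin n, w ≠ ⟨(j : ℕ) + 1, hy⟩ ∧ w ≠ ⟨n - 1, hz'⟩ →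
      ‖Xmat n b a w j‖ = 0 := by
    intro w hw
    have h1' : (w : ℕ) ≠ (j : ℕ) + 1 := fun h => hw.1 (Fin.ext h)
    have h2' : (w : ℕ) ≠ n - 1 := fun h => hw.2 (Fin.ext h)
    rw [Xmat_eq_zero a (by omega) (by omega) (by omega) (by omega) (by omega),
      norm_zero]
  rw [Fintype.sum_eq_add _ _ hyz hzero]
  have e1 : ‖Xmat n b a ⟨(j : ℕ) + 1, hy⟩ j‖ = 1 := by
    rw [Xmat_eq_sub a rfl (show (j : ℕ) + 1 + 2 ≤ n by omega), norm_one]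
  have e2 : ‖Xmat n b a ⟨n - 1, hz'⟩ j‖ =
      ‖a k‖ / ‖a 0‖ := by
    rw [Xmat_eq_div a hn rfl (by omega) (by omega) (by omega),
      show n - 2 - (j : ℕ) = k by omega, norm_div]
  rw [e1, e2]

private lemma colF_0 {n : ℕ} (a : ℕ → ℂ) (hn : 3 ≤ n) {j : Fin n}
    (hj : (j : ℕ) = 0) :
    ∑ i, ‖Frob n a i j‖ = ‖a 0‖ := by
  have hz' : n - 1 < n := by omega
  have hzero : ∀ i : Fin n, i ≠ ⟨n - 1, hz'⟩ → ‖Frob n a i j‖ = 0 := by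
    intro i hix
    have h0 : (i : ℕ) ≠ n - 1 := fun h => hix (Fin.ext h)
    rw [Frob_eq_zero a (by omega) h0, norm_zero]
  rw [Fintype.sum_eq_single _ hzero, Frob_eq_bot a (by omega) rfl, hj,
    norm_neg]

private lemma colF_j {n : ℕ} (a : ℕ → ℂ) (hn : 3 ≤ n) {j : Fin n}
    (hj : 1 ≤ (j : ℕ)) :
    ∑ i, ‖Frob n a i j‖ = 1 + ‖a (j : ℕ)‖ := by
  have hlt := j.isLt
  have hy : (j : ℕ) - 1 < n := by omega
  have hz' : n - 1 < n := by omega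
  have hyz : (⟨(j : ℕ) - 1, hy⟩ : Fin n) ≠ ⟨n - 1, hz'⟩ := fun h => by
    have h' : (j : ℕ) - 1 = n - 1 := congrArg Fin.val h; omega
  have hzero : ∀ w : Fin n, w ≠ ⟨(j : ℕ) - 1, hy⟩ ∧ w ≠ ⟨n - 1, hz'⟩ →
      ‖Frob n a w j‖ = 0 := by
    intro w hw
    have h1' : (w : ℕ) ≠ (j : ℕ) - 1 := fun h => hw.1 (Fin.ext h)
    have h2' : (w : ℕ) ≠ n - 1 := fun h => hw.2 (Fin.ext h)
    rw [Frob_eq_zero a (by omega) h2', norm_zero]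
  rw [Fintype.sum_eq_add _ _ hyz hzero]
  have e1 : ‖Frob n a ⟨(j : ℕ) - 1, hy⟩ j‖ = 1 := by
    rw [Frob_eq_sub a (show (j : ℕ) = (j : ℕ) - 1 + 1 by omega), norm_one]
  have e2 : ‖Frob n a ⟨n - 1, hz'⟩ j‖ = ‖a (j : ℕ)‖ := by
    rw [Frob_eq_bot a (show (j : ℕ) ≠ n - 1 + 1 by omega) rfl, norm_neg]
  rw [e1, e2]

private lemma rowF_ge {n : ℕ} (a : ℕ → ℂ) (hn : 3 ≤ n) (m : ℕ) (hm1 : 1 ≤ m)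
    (hm2 : m ≤ n - 1) (hx : n - 1 < n) :
    ‖a 0‖ + ‖a m‖ ≤
      ∑ jj, ‖Frob n a ⟨n - 1, hx⟩ jj‖ := by
  have hu : (0 : ℕ) < n := by omega
  have hv : m < n := by omega
  have hne : (⟨0, hu⟩ : Fin n) ≠ ⟨m, hv⟩ := fun h => by
    have h' : (0 : ℕ) = m := congrArg Fin.val h; omega
  have hsub : ∑ jj ∈ ({⟨0, hu⟩, ⟨m, hv⟩} : Finset (Fin n)),
      ‖Frob n a ⟨n - 1, hx⟩ jj‖ ≤
      ∑ jj, ‖Frob n a ⟨n - 1, hx⟩ jj‖ :=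
    Finset.sum_le_sum_of_subset_of_nonneg (Finset.subset_univ _)
      (fun _ _ _ => norm_nonneg _)
  rw [Finset.sum_pair hne] at hsub
  have e1 : Frob n a ⟨n - 1, hx⟩ ⟨0, hu⟩ = -a 0 :=
    Frob_eq_bot a (show (0 : ℕ) ≠ n - 1 + 1 by omega) rfl
  have e2 : Frob n a ⟨n - 1, hx⟩ ⟨m, hv⟩ = -a m :=
    Frob_eq_bot a (show m ≠ n - 1 + 1 by omega) rfl
  rw [e1, e2, norm_neg, norm_neg] at hsub
  exact hsub


/-- with `M = max{|a_k| : 1 ≤ k ≤ n-1}` and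
`m = max{k ∈ {1, …, n-1} : |a_k| = M}`, for `1 ≤ b ≤ n-2` one has
`‖X_b‖_1 < N(F)` if and only if `1 < |a_0| < 1 + M`, `m ≤ b`, and
`|a_{b+1}| + |a_b|/|a_0| < M`. -/
theorem stmt18 (n : ℕ) (hn : 3 ≤ n) (a : ℕ → ℂ) (ha : a 0 ≠ 0) (M : ℝ)
    (hM : IsGreatest ((fun k => ‖a k‖) '' (Set.Icc 1 (n - 1))) M)
    (m : ℕ) (hm1 : 1 ≤ m) (hm2 : m ≤ n - 1) (hm3 : ‖a m‖ = M)
    (hm4 : ∀ k : ℕ, 1 ≤ k → k ≤ n - 1 → ‖a k‖ = M → k ≤ m)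
    (b : ℕ) (hb1 : 1 ≤ b) (hb2 : b ≤ n - 2) :
    oneNorm (Xmat n b a) < NN (Frob n a) ↔
      1 < ‖a 0‖ ∧ ‖a 0‖ < 1 + M ∧ m ≤ b ∧
        ‖a (b + 1)‖ + ‖a b‖ / ‖a 0‖ < M := by
  haveI : Nonempty (Fin n) := ⟨⟨0, by omega⟩⟩
  have hb2' : b + 2 ≤ n := by omega
  have hA0 : 0 < ‖a 0‖ := norm_pos_iff.mpr ha
  have hM0 : 0 ≤ M := hm3 ▸ norm_nonneg (a m)
  have hMle : ∀ k : ℕ, 1 ≤ k → k ≤ n - 1 → ‖a k‖ ≤ M := fun k h1 h2 =>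
    hM.2 (Set.mem_image_of_mem _ (Set.mem_Icc.mpr ⟨h1, h2⟩))
  have hON : oneNorm (Xmat n b a) = ⨆ jj, ∑ i, ‖Xmat n b a i jj‖ := rfl
  constructor
  · intro h
    have hcol : ∀ jj : Fin n, (∑ i, ‖Xmat n b a i jj‖) < NN (Frob n a) := by
      intro jj
      have := le_finSup (fun jj => ∑ i, ‖Xmat n b a i jj‖) jj
      rw [← hON] at this
      exact lt_of_le_of_lt this h
    have hFcol : oneNorm (Frob n a) ≤ max (‖a 0‖) (1 + M) := by
      show (⨆ jj, ∑ i, ‖Frob n a i jj‖) ≤ _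
      refine ciSup_le fun jj => ?_
      by_cases hj0 : (jj : ℕ) = 0
      · rw [colF_0 a hn hj0]; exact le_max_left _ _
      · have hlt := jj.isLt
        rw [colF_j a hn (by omega)]
        have := hMle (jj : ℕ) (by omega) (by omega)
        exact le_trans (by linarith) (le_max_right _ _)
    have hNFle : NN (Frob n a) ≤ max (‖a 0‖) (1 + M) :=
      le_trans (min_le_right _ _) hFcol
    have hx1 : n - 1 < n := by omega
    have h1 : ‖a 0‖ < 1 + M := by
      have hc := hcol ⟨n - 1, hx1⟩
      rw [colX_L1 (j := ⟨n - 1, hx1⟩) a hn hb1 rfl] at hc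
      have h' := lt_of_lt_of_le hc hNFle
      rcases lt_max_iff.mp h' with h'' | h''
      · exact absurd h'' (lt_irrefl _)
      · exact h''
    have hNF1 : NN (Frob n a) ≤ 1 + M := by
      rwa [max_eq_right h1.le] at hNFle
    have hx2 : n - 2 - b < n := by omega
    have hkey : ‖a (b + 1)‖ + ‖a b‖ / ‖a 0‖ < M := by
      have hc := hcol ⟨n - 2 - b, hx2⟩
      rw [colX_L3 (j := ⟨n - 2 - b, hx2⟩) a hn hb1 hb2'
        (show n - 2 - b + b = n - 2 by omega)] at hc
      have := lt_of_lt_of_le hc hNF1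
      linarith
    have hmb : m ≤ b := by
      by_contra hcon
      push_neg at hcon
      rcases Nat.lt_or_ge m (b + 2) with hm' | hm'
      · have hmeq : m = b + 1 := by omega
        have hab1 : ‖a (b + 1)‖ = M := by rw [← hmeq]; exact hm3
        have hd : 0 ≤ ‖a b‖ / ‖a 0‖ :=
          div_nonneg (norm_nonneg _) (norm_nonneg _)
        linarith
      · have hx3 : n - 1 - m < n := by omega
        have hc := hcol ⟨n - 1 - m, hx3⟩
        rw [colX_L4 (j := ⟨n - 1 - m, hx3⟩) a hn hb1
          (show n - 1 - m + b + 3 ≤ n by omega) m (show n - 1 - m + m + 1 = n by omega),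
          hm3] at hc
        have := lt_of_lt_of_le hc hNF1
        linarith
    have h0 : 1 < ‖a 0‖ := by
      by_contra hcon
      push_neg at hcon
      have hMdiv : M ≤ M / ‖a 0‖ := by
        rw [le_div_iff₀ hA0]
        exact le_trans (mul_le_of_le_one_right hM0 hcon) le_rfl
      rcases Nat.lt_or_ge m b with hm' | hm'
      · have hx4 : n - 2 - m < n := by omega
        have hc := hcol ⟨n - 2 - m, hx4⟩
        rw [colX_L5 (j := ⟨n - 2 - m, hx4⟩) a hn hb1
          (show n - 1 ≤ n - 2 - m + b by omega) (show n - 2 - m + 3 ≤ n by omega)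
          m (show n - 2 - m + m + 2 = n by omega), hm3] at hc
        have := lt_of_lt_of_le hc hNF1
        linarith
      · have hmeq : m = b := by omega
        have hab : ‖a b‖ = M := by rw [← hmeq]; exact hm3
        rw [hab] at hkey
        have h2 : 0 ≤ ‖a (b + 1)‖ := norm_nonneg _
        linarith
    exact ⟨h0, h1, hmb, hkey⟩
  · rintro ⟨h0, h1, hmb, hkey⟩
    have hMpos : 0 < M := by
      have : 0 ≤ ‖a (b + 1)‖ + ‖a b‖ / ‖a 0‖ := by
        positivity
      linarith
    have hXlt : oneNorm (Xmat n b a) < 1 + M := by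
      rw [hON]
      refine finSup_lt (by omega) fun jj => ?_
      have hjlt := jj.isLt
      by_cases hc1 : (jj : ℕ) = n - 1
      · rw [colX_L1 a hn hb1 hc1]; linarith
      · by_cases hc2 : (jj : ℕ) = n - 2
        · rw [colX_L2 a hn hb1 hc2]; linarith
        · by_cases hc3 : (jj : ℕ) + b = n - 2
          · rw [colX_L3 a hn hb1 hb2' hc3]; linarith
          · by_cases hc4 : (jj : ℕ) + b + 3 ≤ n
            · rw [colX_L4 a hn hb1 hc4 (n - 1 - (jj : ℕ)) (by omega)]
              have hle : ‖a (n - 1 - (jj : ℕ))‖ ≤ M :=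
                hMle _ (by omega) (by omega)
              have hneq : ‖a (n - 1 - (jj : ℕ))‖ ≠ M := fun hEq => by
                have := hm4 _ (by omega) (by omega) hEq; omega
              have := lt_of_le_of_ne hle hneq
              linarith
            · rw [colX_L5 a hn hb1 (by omega) (by omega) (n - 2 - (jj : ℕ)) (by omega)]
              have hle : ‖a (n - 2 - (jj : ℕ))‖ ≤ M :=
                hMle _ (by omega) (by omega)
              have hdiv : ‖a (n - 2 - (jj : ℕ))‖ / ‖a 0‖ ≤
                  M / ‖a 0‖ := by gcongr
              have hMM : M / ‖a 0‖ < M := div_lt_self hMpos h0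
              linarith
    show oneNorm (Xmat n b a) < min (infNorm (Frob n a)) (oneNorm (Frob n a))
    refine lt_min ?_ ?_
    · have hx1 : n - 1 < n := by omega
      have hrow := rowF_ge a hn m hm1 hm2 hx1
      rw [hm3] at hrow
      have hIN : (∑ jj, ‖Frob n a ⟨n - 1, hx1⟩ jj‖) ≤ infNorm (Frob n a) :=
        le_finSup (fun i => ∑ jj, ‖Frob n a i jj‖) _
      calc oneNorm (Xmat n b a) < 1 + M := hXlt
        _ < ‖a 0‖ + M := by linarith
        _ ≤ _ := le_trans hrow hIN
    · have hxm : m < n := by omega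
      have hcolm : (∑ i, ‖Frob n a i ⟨m, hxm⟩‖) = 1 + M := by
        rw [colF_j (j := ⟨m, hxm⟩) a hn hm1]
        rw [show ((⟨m, hxm⟩ : Fin n) : ℕ) = m from rfl, hm3]
      have hle : (1 : ℝ) + M ≤ oneNorm (Frob n a) :=
        hcolm ▸ le_finSup (fun jj => ∑ i, ‖Frob n a i jj‖) ⟨m, hxm⟩
      exact lt_of_lt_of_le hXlt hle

end
end

section
/- Suppose n ≥ 3, 1 ≤ b ≤ n−2, and |a_0| > 1. Then ‖W‖_∞ / ‖X_b‖_1 ≤ 2 − 1/|a_0|, i.e., ‖W‖_∞ ≤ (2 − 1/|a_0|)·‖X_b‖_1. -/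
noncomputable section

lemma sum_eq_pair' {n : ℕ} (f : Fin n → ℝ) (j0 j1 : Fin n) (hne : j0 ≠ j1)
    (h0 : ∀ j, j ≠ j0 → j ≠ j1 → f j = 0) :
    ∑ j, f j = f j0 + f j1 := by
  rw [← Finset.sum_pair hne]
  refine (Finset.sum_subset (Finset.subset_univ _) ?_).symm
  intro x _ hx
  simp only [Finset.mem_insert, Finset.mem_singleton, not_or] at hx
  exact h0 x hx.1 hx.2

lemma pair_le_sum' {n : ℕ} (f : Fin n → ℝ) (hf : ∀ j, 0 ≤ f j) (j0 j1 : Fin n)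
    (hne : j0 ≠ j1) : f j0 + f j1 ≤ ∑ j, f j := by
  rw [← Finset.sum_pair hne]
  exact Finset.sum_le_sum_of_subset_of_nonneg (Finset.subset_univ _) (fun x _ _ => hf x)

set_option maxHeartbeats 1000000 in
/-- if `n ≥ 3`, `1 ≤ b ≤ n-2`, and `|a_0| > 1`, then
`‖W‖_∞ ≤ (2 - 1/|a_0|)·‖X_b‖_1`. -/
theorem stmt19 (n : ℕ) (hn : 3 ≤ n) (a : ℕ → ℂ) (ha : a 0 ≠ 0)
    (b : ℕ) (hb1 : 1 ≤ b) (hb2 : b ≤ n - 2)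
    (ha0 : 1 < ‖a 0‖) :
    infNorm (Wmat n a) ≤ (2 - 1 / ‖a 0‖) * oneNorm (Xmat n b a) := by
  haveI : Nonempty (Fin n) := ⟨⟨0, by omega⟩⟩
  set α := ‖a 0‖ with hαdef
  have hαpos : (0:ℝ) < α := by linarith
  set β := 1 / α with hβdef
  have hβpos : (0:ℝ) < β := by positivity
  have hαβ : α * β = 1 := by
    rw [hβdef]; field_simp
  have hβ1 : β < 1 := by
    rw [hβdef]; rw [div_lt_one hαpos]; exact ha0
  set M := oneNorm (Xmat n b a) with hM
  have habs : ∀ (i j : Fin n), (0:ℝ) ≤ ‖Xmat n b a i j‖ :=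
    fun i j => norm_nonneg _
  have hcol : ∀ j : Fin n, (∑ i, ‖Xmat n b a i j‖) ≤ M := by
    intro j
    rw [hM, oneNorm]
    exact le_ciSup (f := fun j => ∑ i, ‖Xmat n b a i j‖) ((Set.finite_range _).bddAbove) j
  -- M ≥ α from column n-1
  have hMα : α ≤ M := by
    have h1 : Xmat n b a ⟨0, by omega⟩ ⟨n-1, by omega⟩ = -a 0 := by
      simp only [Xmat, Matrix.of_apply, Fin.val_mk]
      split_ifs <;>
            first
            | rfl
            | (congr 2 <;> omega)
            | (exfalso; omega)
            | (exfalso; simp only [true_and, false_and, and_true, not_false_iff] at * <;> omega)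
            | (exfalso; simp_all <;> omega)
    have := Finset.single_le_sum (f := fun i => ‖Xmat n b a i ⟨n-1, by omega⟩‖)
      (fun i _ => habs i _) (Finset.mem_univ ⟨0, by omega⟩)
    simp only [h1, norm_neg] at this
    exact le_trans this (hcol _)
  have hM0 : (0:ℝ) ≤ M := le_trans hαpos.le hMα
  apply ciSup_le
  intro i
  -- case on the row index
  rcases Nat.lt_or_ge (i : ℕ) 2 with hi2 | hi2
  · rcases Nat.lt_or_ge (i : ℕ) 1 with hi1 | hi1
    · -- row 0 : sum = |a (n-1)| + α
      have hi0 : (i : ℕ) = 0 := by omega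
      have hrow : (∑ j, ‖Wmat n a i j‖)
          = ‖a (n-1)‖ + α := by
        rw [sum_eq_pair' _ (⟨0, by omega⟩ : Fin n) (⟨n-1, by omega⟩ : Fin n)
          (by simp only [ne_eq, Fin.mk.injEq]; omega) ?_]
        · have e0 : Wmat n a i ⟨0, by omega⟩ = -a (n-1) := by
            simp only [Wmat, Matrix.of_apply, Fin.val_mk]
            split_ifs <;>
            first
            | rfl
            | (congr 2 <;> omega)
            | (exfalso; omega)
            | (exfalso; simp only [true_and, false_and, and_true, not_false_iff] at * <;> omega)
            | (exfalso; simp_all <;> omega)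
          have e1 : Wmat n a i ⟨n-1, by omega⟩ = -a 0 := by
            simp only [Wmat, Matrix.of_apply, Fin.val_mk]
            split_ifs <;>
            first
            | rfl
            | (congr 2 <;> omega)
            | (exfalso; omega)
            | (exfalso; simp only [true_and, false_and, and_true, not_false_iff] at * <;> omega)
            | (exfalso; simp_all <;> omega)
          rw [e0, e1]; simp [hαdef]
        · intro j hj0 hj1
          have hj0' : (j : ℕ) ≠ 0 := fun h => hj0 (Fin.ext h)
          have hj1' : (j : ℕ) ≠ n - 1 := fun h => hj1 (Fin.ext h)
          have : Wmat n a i j = 0 := by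
            simp only [Wmat, Matrix.of_apply, Fin.val_mk]
            split_ifs <;>
            first
            | rfl
            | (congr 2 <;> omega)
            | (exfalso; omega)
            | (exfalso; simp only [true_and, false_and, and_true, not_false_iff] at * <;> omega)
            | (exfalso; simp_all <;> omega)
          rw [this, norm_zero]
      rw [hrow]
      -- need |a (n-1)| + 1 ≤ M from column 0
      have hMt : ‖a (n-1)‖ + 1 ≤ M := by
        have e0 : Xmat n b a ⟨0, by omega⟩ ⟨0, by omega⟩ = -a (n-1) := by
          simp only [Xmat, Matrix.of_apply, Fin.val_mk]
          split_ifs <;>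
            first
            | rfl
            | (congr 2 <;> omega)
            | (exfalso; omega)
            | (exfalso; simp only [true_and, false_and, and_true, not_false_iff] at * <;> omega)
            | (exfalso; simp_all <;> omega)
        have e1 : Xmat n b a ⟨1, by omega⟩ ⟨0, by omega⟩ = 1 := by
          simp only [Xmat, Matrix.of_apply, Fin.val_mk]
          split_ifs <;>
            first
            | rfl
            | (congr 2 <;> omega)
            | (exfalso; omega)
            | (exfalso; simp only [true_and, false_and, and_true, not_false_iff] at * <;> omega)
            | (exfalso; simp_all <;> omega)
        have := pair_le_sum' (fun i => ‖Xmat n b a i ⟨0, by omega⟩‖)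
          (fun i => habs i _) ⟨0, by omega⟩ ⟨1, by omega⟩ (by simp only [ne_eq, Fin.mk.injEq]; omega)
        simp only [e0, e1, norm_neg, norm_one] at this
        exact le_trans this (hcol _)
      set t := ‖a (n-1)‖ with htdef
      have ht : 0 ≤ t := norm_nonneg _
      -- (2-β) M ≥ t + α
      nlinarith [mul_le_mul_of_nonneg_left hMt hαpos.le,
        mul_le_mul_of_nonneg_left hMα (by linarith : (0:ℝ) ≤ α - 1),
        mul_le_mul_of_nonneg_left
          (add_le_add (mul_le_mul_of_nonneg_left hMt hαpos.le)
            (mul_le_mul_of_nonneg_left hMα (by linarith : (0:ℝ) ≤ α - 1))) hβpos.le,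
        hαβ]
    · -- row 1 : sum = 1
      have hi1' : (i : ℕ) = 1 := by omega
      have hrow : (∑ j, ‖Wmat n a i j‖) = 1 := by
        rw [Finset.sum_eq_single_of_mem (⟨0, by omega⟩ : Fin n) (Finset.mem_univ _) ?_]
        · have : Wmat n a i ⟨0, by omega⟩ = 1 := by
            simp only [Wmat, Matrix.of_apply, Fin.val_mk]
            split_ifs <;>
            first
            | rfl
            | (congr 2 <;> omega)
            | (exfalso; omega)
            | (exfalso; simp only [true_and, false_and, and_true, not_false_iff] at * <;> omega)
            | (exfalso; simp_all <;> omega)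
          rw [this, norm_one]
        · intro j _ hj
          have hj' : (j : ℕ) ≠ 0 := fun h => hj (Fin.ext h)
          have : Wmat n a i j = 0 := by
            simp only [Wmat, Matrix.of_apply, Fin.val_mk]
            split_ifs <;>
            first
            | rfl
            | (congr 2 <;> omega)
            | (exfalso; omega)
            | (exfalso; simp only [true_and, false_and, and_true, not_false_iff] at * <;> omega)
            | (exfalso; simp_all <;> omega)
          rw [this, norm_zero]
      rw [hrow]
      nlinarith
  · -- rows 2 ≤ i ≤ n-1 : sum = 1 + |a (i-1)| / α
    have hin : (i : ℕ) ≤ n - 1 := by omega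
    have hrow : (∑ j, ‖Wmat n a i j‖)
        = 1 + ‖a ((i : ℕ) - 1)‖ * β := by
      rw [sum_eq_pair' _ (⟨(i : ℕ) - 1, by omega⟩ : Fin n) (⟨0, by omega⟩ : Fin n)
        (by simp only [ne_eq, Fin.mk.injEq]; omega) ?_]
      · have e0 : Wmat n a i ⟨(i : ℕ) - 1, by omega⟩ = 1 := by
          simp only [Wmat, Matrix.of_apply, Fin.val_mk]
          split_ifs <;>
            first
            | rfl
            | (congr 2 <;> omega)
            | (exfalso; omega)
            | (exfalso; simp only [true_and, false_and, and_true, not_false_iff] at * <;> omega)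
            | (exfalso; simp_all <;> omega)
        have e1 : Wmat n a i ⟨0, by omega⟩ = a ((i : ℕ) - 1) / a 0 := by
          simp only [Wmat, Matrix.of_apply, Fin.val_mk]
          split_ifs <;>
            first
            | rfl
            | (congr 2 <;> omega)
            | (exfalso; omega)
            | (exfalso; simp only [true_and, false_and, and_true, not_false_iff] at * <;> omega)
            | (exfalso; simp_all <;> omega)
        rw [e0, e1, norm_one, norm_div]
        rw [hβdef, ← hαdef, div_eq_mul_one_div]
      · intro j hj0 hj1
        have hj0' : (j : ℕ) ≠ (i : ℕ) - 1 := fun h => hj0 (Fin.ext h)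
        have hj1' : (j : ℕ) ≠ 0 := fun h => hj1 (Fin.ext h)
        have : Wmat n a i j = 0 := by
          simp only [Wmat, Matrix.of_apply, Fin.val_mk]
          split_ifs <;>
            first
            | rfl
            | (congr 2 <;> omega)
            | (exfalso; omega)
            | (exfalso; simp only [true_and, false_and, and_true, not_false_iff] at * <;> omega)
            | (exfalso; simp_all <;> omega)
        rw [this, norm_zero]
    rw [hrow]
    set s := ‖a ((i : ℕ) - 1)‖ with hsdef
    have hs : 0 ≤ s := norm_nonneg _
    rcases Nat.lt_or_ge (i : ℕ) (b + 2) with hib | hib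
    · -- 2 ≤ i ≤ b+1 : column n-1-i gives M ≥ 1 + s β
      have hMs : 1 + s * β ≤ M := by
        have e0 : Xmat n b a ⟨n - (i:ℕ), by omega⟩ ⟨n - 1 - (i:ℕ), by omega⟩ = 1 := by
          simp only [Xmat, Matrix.of_apply, Fin.val_mk]
          split_ifs <;>
            first
            | rfl
            | (congr 2 <;> omega)
            | (exfalso; omega)
            | (exfalso; simp only [true_and, false_and, and_true, not_false_iff] at * <;> omega)
            | (exfalso; simp_all <;> omega)
        have e1 : Xmat n b a ⟨n - 1, by omega⟩ ⟨n - 1 - (i:ℕ), by omega⟩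
            = a ((i:ℕ) - 1) / a 0 := by
          simp only [Xmat, Matrix.of_apply, Fin.val_mk]
          split_ifs <;>
            first
            | rfl
            | (congr 2 <;> omega)
            | (exfalso; omega)
            | (exfalso; simp only [true_and, false_and, and_true, not_false_iff] at * <;> omega)
            | (exfalso; simp_all <;> omega)
        have := pair_le_sum' (fun k => ‖Xmat n b a k ⟨n - 1 - (i:ℕ), by omega⟩‖)
          (fun k => habs k _) ⟨n - (i:ℕ), by omega⟩ ⟨n - 1, by omega⟩
          (by simp only [ne_eq, Fin.mk.injEq]; omega)
        simp only [e0, e1, norm_one, norm_div] at this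
        rw [← hαdef, ← hsdef, div_eq_mul_one_div, ← hβdef] at this
        exact le_trans this (hcol _)
      nlinarith [mul_le_mul_of_nonneg_left hMs (by linarith : (0:ℝ) ≤ 2 - β)]
    · -- b+2 ≤ i : column n-i gives M ≥ s + 1
      have hMs : s + 1 ≤ M := by
        have e0 : Xmat n b a ⟨0, by omega⟩ ⟨n - (i:ℕ), by omega⟩ = -a ((i:ℕ) - 1) := by
          simp only [Xmat, Matrix.of_apply, Fin.val_mk]
          split_ifs <;>
            first
            | rfl
            | (congr 2 <;> omega)
            | (exfalso; omega)
            | (exfalso; simp only [true_and, false_and, and_true, not_false_iff] at * <;> omega)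
            | (exfalso; simp_all <;> omega)
        have e1 : Xmat n b a ⟨n - (i:ℕ) + 1, by omega⟩ ⟨n - (i:ℕ), by omega⟩ = 1 := by
          simp only [Xmat, Matrix.of_apply, Fin.val_mk]
          split_ifs <;>
            first
            | rfl
            | (congr 2 <;> omega)
            | (exfalso; omega)
            | (exfalso; simp only [true_and, false_and, and_true, not_false_iff] at * <;> omega)
            | (exfalso; simp_all <;> omega)
        have := pair_le_sum' (fun k => ‖Xmat n b a k ⟨n - (i:ℕ), by omega⟩‖)
          (fun k => habs k _) ⟨0, by omega⟩ ⟨n - (i:ℕ) + 1, by omega⟩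
          (by simp only [ne_eq, Fin.mk.injEq]; omega)
        simp only [e0, e1, norm_neg, norm_one, ← hsdef] at this
        exact le_trans this (hcol _)
      nlinarith [mul_le_mul_of_nonneg_left hMs (by linarith : (0:ℝ) ≤ 2 - β)]

end
end
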